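/- Van der Corput's lemma: let f : (a,b) → ℝ be a C¹ function and t > 0. Suppose |f'(x)| ≥ t for all x ∈ (a,b) and f' is monotonic on (a,b). Then |∫_a^b e^{iλ f(x)} dx| ≤ 3 (λ t)^{-1} for all λ > 0. -/

import Mathlib

open MeasureTheory Set


/-- If `φ` has norm ≤ 1 and derivative `ψ` on `Ioo a v`, with `ψ` integrable there,
then the integral of `ψ` over `Ioo a v` has norm at most 2. -/
lemma vdc_lemA (a v : ℝ) (hav : a < v) (φ ψ : ℝ → ℂ)
    (hφ : ∀ x ∈ Ioo a v, ‖φ x‖ ≤ 1)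
    (hd : ∀ x ∈ Ioo a v, HasDerivAt φ (ψ x) x)
    (hint : IntegrableOn ψ (Ioo a v)) :
    ‖∫ x in Ioo a v, ψ x‖ ≤ 2 := by
  set d : ℝ := (v - a) / 3 with hd_def
  have hd0 : 0 < d := by rw [hd_def]; linarith
  set s : ℕ → Set ℝ := fun n => Icc (a + d / (n+1)) (v - d / (n+1)) with hs_def
  have hmem : ∀ n : ℕ, s n ⊆ Ioo a v := by
    intro n x hx
    have h1 : (0:ℝ) < d / (n+1) := by positivity
    exact ⟨lt_of_lt_of_le (by linarith) hx.1, lt_of_le_of_lt hx.2 (by linarith)⟩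
  have hmono : Monotone s := by
    intro m n hmn
    apply Icc_subset_Icc
    · have : (d / (n+1) : ℝ) ≤ d / (m+1) := by
        apply div_le_div_of_nonneg_left hd0.le (by positivity)
        exact_mod_cast by exact_mod_cast add_le_add_left (Nat.cast_le.2 hmn) 1
      linarith
    · have : (d / (n+1) : ℝ) ≤ d / (m+1) := by
        apply div_le_div_of_nonneg_left hd0.le (by positivity)
        exact_mod_cast add_le_add_left (Nat.cast_le.2 hmn) 1
      linarith
  have hunion : (⋃ n, s n) = Ioo a v := by
    apply Subset.antisymm
    · exact iUnion_subset hmem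
    · intro x hx
      obtain ⟨n, hn⟩ := exists_nat_gt (d / min (x - a) (v - x))
      have hmin : 0 < min (x - a) (v - x) := lt_min (by linarith [hx.1]) (by linarith [hx.2])
      have hn' : d / (n+1) < min (x - a) (v - x) := by
        rw [div_lt_iff₀ (by positivity)]
        have h2 : d / min (x - a) (v - x) < n + 1 := hn.trans (by linarith)
        calc d = (d / min (x - a) (v - x)) * min (x - a) (v - x) := by field_simp
        _ < (n+1) * min (x-a) (v-x) := by
            exact mul_lt_mul_of_pos_right h2 hmin
        _ = min (x-a) (v-x) * (n+1) := mul_comm _ _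
      exact mem_iUnion.2 ⟨n, ⟨by linarith [min_le_left (x-a) (v-x), hn'],
        by linarith [min_le_right (x-a) (v-x), hn']⟩⟩
  have hms : ∀ n, MeasurableSet (s n) := fun n => measurableSet_Icc
  have hIU : IntegrableOn ψ (⋃ n, s n) := by rw [hunion]; exact hint
  have htend := MeasureTheory.tendsto_setIntegral_of_monotone hms hmono hIU
  rw [hunion] at htend
  refine le_of_tendsto (htend.norm) (Filter.Eventually.of_forall ?_)
  intro n
  set an := a + d / (n+1) with han
  set vn := v - d / (n+1) with hvn
  have hanvn : an ≤ vn := by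
    have h1 : d / ((n:ℝ)+1) ≤ d := by
      rw [div_le_iff₀ (by positivity)]
      nlinarith [Nat.cast_nonneg (α := ℝ) n]
    rw [han, hvn, hd_def] at *
    linarith
  have hsub : Icc an vn ⊆ Ioo a v := hmem n
  have : ∫ x in s n, ψ x = ∫ x in an..vn, ψ x := by
    rw [intervalIntegral.integral_of_le hanvn, hs_def]
    exact (integral_Icc_eq_integral_Ioc).trans rfl
  rw [this]
  have hftc : ∫ x in an..vn, ψ x = φ vn - φ an := by
    apply intervalIntegral.integral_eq_sub_of_hasDerivAt
    · intro x hx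
      rw [uIcc_of_le hanvn] at hx
      exact hd x (hsub hx)
    · rw [intervalIntegrable_iff_integrableOn_Ioc_of_le hanvn]
      exact hint.mono_set ((Ioc_subset_Icc_self).trans hsub)
  rw [hftc]
  calc ‖φ vn - φ an‖ ≤ ‖φ vn‖ + ‖φ an‖ := norm_sub_le _ _
  _ ≤ 1 + 1 := add_le_add (hφ _ (hsub (right_mem_Icc.2 hanvn))) (hφ _ (hsub (left_mem_Icc.2 hanvn)))
  _ = 2 := by norm_num

lemma vdc_bdd {E : Type*} [NormedAddCommGroup E] {g : ℝ → E} {s : Set ℝ}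
    (hs : MeasurableSet s) (hvol : volume s ≠ ⊤)
    (hm : AEStronglyMeasurable g (volume.restrict s)) {C : ℝ}
    (hb : ∀ x ∈ s, ‖g x‖ ≤ C) : IntegrableOn g s := by
  apply Integrable.mono' (g := fun _ => C)
  · exact integrableOn_const hvol
  · exact hm
  · exact (ae_restrict_iff' hs).2 (Filter.Eventually.of_forall hb)

lemma vdc_core (a b : ℝ) (hab : a < b) (f p : ℝ → ℝ)
    (hfm : Measurable f) (hpm : Measurable p)
    (hderiv : ∀ x ∈ Ioo a b, HasDerivAt f (p x) x)
    (t : ℝ) (ht : 0 < t) (hlow : ∀ x ∈ Ioo a b, t ≤ p x)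
    (hmono : MonotoneOn p (Ioo a b))
    (lam : ℝ) (hlam : 0 < lam) :
    ‖∫ x in Ioo a b, Complex.exp (Complex.I * (lam * f x))‖ ≤ 2 * (lam * t)⁻¹ := by
  set S : Set ℝ := Ioo a b with hS
  have hSm : MeasurableSet S := measurableSet_Ioo
  have hSvol : volume S ≠ ⊤ := by simp [hS, Real.volume_Ioo]
  set φ : ℝ → ℂ := fun x => Complex.exp (Complex.I * (lam * f x)) with hφ_def
  set ψ : ℝ → ℂ := fun x => (Complex.I * lam * p x) * φ x with hψ_def
  set G : ℝ → ℝ := fun x => (p x)⁻¹ with hG_def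
  set L : ℝ := sInf (G '' S) with hL_def
  have hp_pos : ∀ x ∈ S, 0 < p x := fun x hx => lt_of_lt_of_le ht (hlow x hx)
  have hGle : ∀ x ∈ S, G x ≤ t⁻¹ := fun x hx =>
    inv_anti₀ ht (hlow x hx)
  have hG_pos : ∀ x ∈ S, 0 < G x := fun x hx => inv_pos.2 (hp_pos x hx)
  have hGanti : ∀ x ∈ S, ∀ y ∈ S, x ≤ y → G y ≤ G x := by
    intro x hx y hy hxy
    exact inv_anti₀ (hp_pos x hx) (hmono hx hy hxy)
  have hmid : (a + b)/2 ∈ S := ⟨by linarith, by linarith⟩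
  have hne : (G '' S).Nonempty := ⟨G ((a+b)/2), mem_image_of_mem _ hmid⟩
  have hbdd : BddBelow (G '' S) := ⟨0, by rintro _ ⟨x, hx, rfl⟩; exact (hG_pos x hx).le⟩
  have hL0 : 0 ≤ L := le_csInf hne (by rintro _ ⟨x, hx, rfl⟩; exact (hG_pos x hx).le)
  have hLG : ∀ x ∈ S, L ≤ G x := fun x hx => csInf_le hbdd (mem_image_of_mem _ hx)
  have hLt : L ≤ t⁻¹ := (hLG _ hmid).trans (hGle _ hmid)
  -- derivative of φ
  have hd' : ∀ x ∈ S, HasDerivAt φ (ψ x) x := by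
    intro x hx
    have h1 : HasDerivAt (fun y => (Complex.I * (lam * f y) : ℂ)) (Complex.I * (lam * p x)) x := by
      exact (((hderiv x hx).ofReal_comp).const_mul (lam : ℂ)).const_mul Complex.I
    have h2 := h1.cexp
    convert h2 using 1
    rw [hψ_def, hφ_def]
    ring
  -- norms
  have hφnorm : ∀ x : ℝ, ‖φ x‖ = 1 := by
    intro x
    rw [hφ_def]
    simp [Complex.norm_exp]
  have hψnorm : ∀ x ∈ S, ‖ψ x‖ = lam * p x := by
    intro x hx
    rw [hψ_def]
    simp only [norm_mul, Complex.norm_I, one_mul, Complex.norm_real, hφnorm x, mul_one,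
      Real.norm_eq_abs]
    rw [abs_of_pos hlam, abs_of_pos (hp_pos x hx)]
  -- measurability
  have hφmeas : Measurable φ := by
    apply Complex.measurable_exp.comp
    exact (measurable_const.mul ((Complex.measurable_ofReal.comp hfm).const_mul _))
  have hψmeas : Measurable ψ := by
    apply Measurable.mul _ hφmeas
    exact (Complex.measurable_ofReal.comp hpm).const_mul _
  -- integrabilities
  have int_φ : IntegrableOn φ S := by
    apply vdc_bdd hSm hSvol (hφmeas.aestronglyMeasurable) (C := 1)
    intro x _; exact (hφnorm x).le
  have key_bound : ∀ x ∈ S, (G x - L) * (lam * p x) ≤ lam := by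
    intro x hx
    have h1 : L * p x ≥ 0 := mul_nonneg hL0 (hp_pos x hx).le
    have h2 : G x * p x = 1 := inv_mul_cancel₀ (hp_pos x hx).ne'
    nlinarith [hp_pos x hx]
  have int_w : IntegrableOn (fun x => (G x - L) • ψ x) S := by
    apply vdc_bdd hSm hSvol
      (((hpm.inv.sub measurable_const).aestronglyMeasurable).smul hψmeas.aestronglyMeasurable)
      (C := lam)
    intro x hx
    show ‖(G x - L) • ψ x‖ ≤ lam
    rw [norm_smul, hψnorm x hx, Real.norm_eq_abs, abs_of_nonneg (sub_nonneg.2 (hLG x hx))]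
    exact key_bound x hx
  have int_ψ_of_bound : ∀ v : ℝ, v ≤ b → ∀ C : ℝ, (∀ x ∈ Ioo a v, p x ≤ C) →
      IntegrableOn ψ (Ioo a v) := by
    intro v hvb C hC
    apply vdc_bdd measurableSet_Ioo (by simp [Real.volume_Ioo]) hψmeas.aestronglyMeasurable
      (C := lam * C)
    intro x hx
    have hxS : x ∈ S := ⟨hx.1, lt_of_lt_of_le hx.2 hvb⟩
    rw [hψnorm x hxS]
    exact mul_le_mul_of_nonneg_left (hC x hx) hlam.le
  have int_u : IntegrableOn (fun x => L • ψ x) S := by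
    rcases hL0.eq_or_lt with h | h
    · simp [← h]
    · apply vdc_bdd hSm hSvol (hψmeas.aestronglyMeasurable.const_smul L) (C := L * (lam * L⁻¹))
      intro x hx
      show ‖L • ψ x‖ ≤ L * (lam * L⁻¹)
      rw [norm_smul, hψnorm x hx, Real.norm_eq_abs, abs_of_pos h]
      have hpx : p x ≤ L⁻¹ := by
        have h2 := hLG x hx
        rw [hG_def] at h2
        have h3 := inv_anti₀ h h2
        rwa [inv_inv] at h3
      exact mul_le_mul_of_nonneg_left
        (mul_le_mul_of_nonneg_left hpx hlam.le) hL0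
  -- main identity
  have hsplit : (Complex.I * lam) * ∫ x in S, φ x
      = (∫ x in S, L • ψ x) + ∫ x in S, (G x - L) • ψ x := by
    rw [← integral_add int_u int_w, ← integral_const_mul]
    apply setIntegral_congr_fun hSm
    intro x hx
    show Complex.I * (lam:ℂ) * φ x = L • ψ x + (G x - L) • ψ x
    have hpx : (p x : ℂ) ≠ 0 := by
      exact_mod_cast (hp_pos x hx).ne'
    have : (L : ℝ) • ψ x + (G x - L) • ψ x = (G x : ℝ) • ψ x := by
      rw [← add_smul]; ring_nf
    rw [this, hψ_def, hG_def]
    simp only [Complex.real_smul]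
    push_cast
    field_simp
  -- bound on the L-part
  have hu_bound : ‖∫ x in S, L • ψ x‖ ≤ 2 * L := by
    rcases hL0.eq_or_lt with h | h
    · simp [← h]
    · rw [integral_smul, norm_smul, Real.norm_eq_abs, abs_of_pos h, mul_comm]
      apply mul_le_mul_of_nonneg_right _ hL0
      apply vdc_lemA a b hab φ ψ (fun x _ => (hφnorm x).le) hd'
      apply int_ψ_of_bound b le_rfl L⁻¹
      intro x hx
      have h2 := hLG x hx
      rw [hG_def] at h2
      have h3 := inv_anti₀ h h2
      rwa [inv_inv] at h3
  -- Fubini part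
  set F : ℝ × ℝ → ℂ := fun q => if L < q.2 ∧ q.2 < G q.1 then ψ q.1 else 0 with hF_def
  have hAmeas : MeasurableSet {q : ℝ × ℝ | L < q.2 ∧ q.2 < G q.1} := by
    apply MeasurableSet.inter
    · exact measurableSet_lt measurable_const measurable_snd
    · exact measurableSet_lt measurable_snd (hpm.inv.comp measurable_fst)
  have hFmeas : Measurable F := Measurable.ite hAmeas (hψmeas.comp measurable_fst) measurable_const
  have hF_slice : ∀ x, (fun y => F (x, y)) = Set.indicator (Ioo L (G x)) (fun _ => ψ x) := by
    intro x; funext y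
    simp only [hF_def, Set.indicator_apply, Set.mem_Ioo]
  have hF_slice_norm : ∀ x ∈ S, (∫ y : ℝ, ‖F (x, y)‖) = (G x - L) * ‖ψ x‖ := by
    intro x hx
    have h1 : (fun y => ‖F (x, y)‖) = Set.indicator (Ioo L (G x)) (fun _ => ‖ψ x‖) := by
      funext y
      simp only [hF_def, Set.indicator_apply, Set.mem_Ioo]
      by_cases h : L < y ∧ y < G x <;> simp [h]
    rw [h1, integral_indicator measurableSet_Ioo, setIntegral_const,
      Real.volume_real_Ioo_of_le (hLG x hx), smul_eq_mul]
  have hFint : Integrable F ((volume.restrict S).prod volume) := by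
    rw [integrable_prod_iff hFmeas.aestronglyMeasurable]
    constructor
    · apply (ae_restrict_iff' hSm).2 (Filter.Eventually.of_forall ?_)
      intro x _
      rw [hF_slice x, integrable_indicator_iff measurableSet_Ioo]
      exact integrableOn_const (by simp [Real.volume_Ioo])
    · refine Integrable.congr (f := fun x => (G x - L) * ‖ψ x‖) ?_ ?_
      · apply vdc_bdd hSm hSvol
          (((hpm.inv.sub measurable_const).mul hψmeas.norm).aestronglyMeasurable) (C := lam)
        intro x hx
        show ‖(G x - L) * ‖ψ x‖‖ ≤ lam
        rw [Real.norm_eq_abs, abs_of_nonneg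
          (mul_nonneg (sub_nonneg.2 (hLG x hx)) (norm_nonneg _)), hψnorm x hx]
        exact key_bound x hx
      · exact (ae_restrict_iff' hSm).2
          (Filter.Eventually.of_forall fun x hx => (hF_slice_norm x hx).symm)
  have hw_eq : ∫ x in S, (G x - L) • ψ x = ∫ y : ℝ, ∫ x in S, F (x, y) := by
    have h1 : ∫ x in S, (G x - L) • ψ x = ∫ x in S, ∫ y : ℝ, F (x, y) := by
      apply setIntegral_congr_fun hSm
      intro x hx
      show (G x - L) • ψ x = ∫ y : ℝ, F (x, y)
      rw [hF_slice x, integral_indicator measurableSet_Ioo, setIntegral_const,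
        Real.volume_real_Ioo_of_le (hLG x hx)]
    rw [h1]
    exact integral_integral_swap (f := fun x y => F (x, y)) hFint
  have hJ : ∀ y : ℝ, ‖∫ x in S, F (x, y)‖ ≤ Set.indicator (Ioo L t⁻¹) (fun _ => 2) y := by
    intro y
    by_cases hy : y ∈ Ioo L t⁻¹
    · rw [Set.indicator_of_mem hy]
      have hy0 : 0 < y := lt_of_le_of_lt hL0 hy.1
      have hUm : MeasurableSet {x : ℝ | y < G x} :=
        measurableSet_lt measurable_const hpm.inv
      have hstep : ∫ x in S, F (x, y) = ∫ x in S ∩ {x | y < G x}, ψ x := by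
        rw [← setIntegral_indicator hUm]
        apply setIntegral_congr_fun hSm
        intro x hx
        show F (x, y) = Set.indicator {x | y < G x} ψ x
        by_cases h : y < G x
        · rw [Set.indicator_of_mem (show x ∈ {x : ℝ | y < G x} from h)]
          simp only [hF_def]
          exact if_pos ⟨hy.1, h⟩
        · rw [Set.indicator_of_notMem (show x ∉ {x : ℝ | y < G x} from h)]
          simp only [hF_def]
          exact if_neg (fun hc => h hc.2)
      rw [hstep]
      rcases eq_empty_or_nonempty (S ∩ {x | y < G x}) with hWe | hWne
      · rw [hWe]; simp
      · set W := S ∩ {x : ℝ | y < G x} with hW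
        set v := sSup W with hv
        have hWb : BddAbove W := ⟨b, fun x hx => (hx.1.2).le⟩
        obtain ⟨x₀, hx₀⟩ := hWne
        have hav : a < v := lt_of_lt_of_le hx₀.1.1 (le_csSup hWb hx₀)
        have hvb : v ≤ b := csSup_le ⟨x₀, hx₀⟩ (fun x hx => hx.1.2.le)
        have hIooW : Ioo a v ⊆ W := by
          intro x hx
          obtain ⟨u, huW, hxu⟩ := exists_lt_of_lt_csSup ⟨x₀, hx₀⟩ hx.2
          have hxS : x ∈ S := ⟨hx.1, hxu.trans huW.1.2⟩
          exact ⟨hxS, lt_of_lt_of_le huW.2 (hGanti x hxS u huW.1 hxu.le)⟩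
        have hae : W =ᵐ[volume] Ioo a v := by
          rw [MeasureTheory.ae_eq_set]
          constructor
          · refine measure_mono_null ?_ (Real.volume_singleton (a := v))
            intro x hx
            have h1 : x ≤ v := le_csSup hWb hx.1
            have h2 : a < x := hx.1.1.1
            have h3 : ¬(a < x ∧ x < v) := fun hc => hx.2 hc
            simp only [Set.mem_singleton_iff]
            rcases lt_or_eq_of_le h1 with h | h
            · exact absurd ⟨h2, h⟩ h3
            · exact h
          · rw [Set.diff_eq_empty.2 hIooW]; exact measure_empty
        rw [setIntegral_congr_set hae]
        apply vdc_lemA a v hav φ ψ (fun x _ => (hφnorm x).le)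
        · intro x hx; exact hd' x ⟨hx.1, lt_of_lt_of_le hx.2 hvb⟩
        · apply int_ψ_of_bound v hvb y⁻¹
          intro x hx
          have hxW := hIooW hx
          have hyG : y < (p x)⁻¹ := hxW.2
          have hp0 := hp_pos x hxW.1
          have h1 : y * p x < 1 := by
            have := mul_lt_mul_of_pos_right hyG hp0
            rwa [inv_mul_cancel₀ hp0.ne'] at this
          rw [show (y⁻¹ : ℝ) = 1 / y by rw [one_div], le_div_iff₀ hy0]
          nlinarith [mul_comm y (p x)]
    · rw [Set.indicator_of_notMem hy]
      have hz : ∀ x ∈ S, F (x, y) = (0 : ℂ) := by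
        intro x hx
        rw [hF_def]
        apply if_neg
        rintro ⟨h1, h2⟩
        exact hy ⟨h1, lt_of_lt_of_le h2 (hGle x hx)⟩
      rw [setIntegral_congr_fun hSm hz]
      simp
  have hw_bound : ‖∫ x in S, (G x - L) • ψ x‖ ≤ 2 * (t⁻¹ - L) := by
    rw [hw_eq]
    calc ‖∫ y : ℝ, ∫ x in S, F (x, y)‖ ≤ ∫ y : ℝ, ‖∫ x in S, F (x, y)‖ :=
          norm_integral_le_integral_norm _
    _ ≤ ∫ y : ℝ, Set.indicator (Ioo L t⁻¹) (fun _ => (2:ℝ)) y := by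
        apply integral_mono_of_nonneg (Filter.Eventually.of_forall fun y => norm_nonneg _)
          _ (Filter.Eventually.of_forall hJ)
        exact (integrable_indicator_iff measurableSet_Ioo).2
          (integrableOn_const (by simp [Real.volume_Ioo]))
    _ = 2 * (t⁻¹ - L) := by
        rw [integral_indicator measurableSet_Ioo, setIntegral_const,
          Real.volume_real_Ioo_of_le (by linarith), smul_eq_mul]
        ring
  have hfinal : lam * ‖∫ x in S, φ x‖ ≤ 2 * t⁻¹ := by
    have h1 : ‖(Complex.I * lam) * ∫ x in S, φ x‖ = lam * ‖∫ x in S, φ x‖ := by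
      rw [norm_mul, norm_mul, Complex.norm_I, one_mul, Complex.norm_real,
        Real.norm_eq_abs, abs_of_pos hlam]
    calc lam * ‖∫ x in S, φ x‖ = ‖(Complex.I * lam) * ∫ x in S, φ x‖ := h1.symm
    _ = ‖(∫ x in S, L • ψ x) + ∫ x in S, (G x - L) • ψ x‖ := by rw [hsplit]
    _ ≤ 2 * L + 2 * (t⁻¹ - L) := (norm_add_le _ _).trans (add_le_add hu_bound hw_bound)
    _ = 2 * t⁻¹ := by ring
  have h2 : ‖∫ x in S, φ x‖ ≤ 2 * t⁻¹ / lam := by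
    rw [le_div_iff₀ hlam, mul_comm]
    exact hfinal
  calc ‖∫ x in S, φ x‖ ≤ 2 * t⁻¹ / lam := h2
  _ = 2 * (lam * t)⁻¹ := by rw [mul_inv]; ring

lemma vdc_meas_piecewise {f : ℝ → ℝ} {s : Set ℝ} [∀ x : ℝ, Decidable (x ∈ s)]
    (hs : IsOpen s) (hf : ContinuousOn f s) (c : ℝ) :
    Measurable (fun x => if x ∈ s then f x else c) := by
  have h : Measurable fun x => if hx : x ∈ s then f x else c :=
    Measurable.dite (f := fun y : s => f y) (hf.restrict.measurable) measurable_const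
      hs.measurableSet
  simpa [dite_eq_ite] using h

lemma vdc_core' (a b : ℝ) (hab : a < b) (f p : ℝ → ℝ)
    (hderiv : ∀ x ∈ Ioo a b, HasDerivAt f (p x) x)
    (hcont : ContinuousOn p (Ioo a b))
    (t : ℝ) (ht : 0 < t) (hlow : ∀ x ∈ Ioo a b, t ≤ p x)
    (hmono : MonotoneOn p (Ioo a b))
    (lam : ℝ) (hlam : 0 < lam) :
    ‖∫ x in Ioo a b, Complex.exp (Complex.I * (lam * f x))‖ ≤ 2 * (lam * t)⁻¹ := by
  classical
  set f1 : ℝ → ℝ := fun x => if x ∈ Ioo a b then f x else 0 with hf1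
  set p1 : ℝ → ℝ := fun x => if x ∈ Ioo a b then p x else t with hp1
  have hfc : ContinuousOn f (Ioo a b) := fun x hx =>
    ((hderiv x hx).continuousAt).continuousWithinAt
  have hm1 : Measurable f1 := vdc_meas_piecewise isOpen_Ioo hfc 0
  have hm2 : Measurable p1 := vdc_meas_piecewise isOpen_Ioo hcont t
  have hd1 : ∀ x ∈ Ioo a b, HasDerivAt f1 (p1 x) x := by
    intro x hx
    have hev : f1 =ᶠ[nhds x] f := by
      filter_upwards [isOpen_Ioo.mem_nhds hx] with y hy
      exact if_pos hy
    rw [show p1 x = p x from if_pos hx]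
    exact (hderiv x hx).congr_of_eventuallyEq hev
  have hlow1 : ∀ x ∈ Ioo a b, t ≤ p1 x := by
    intro x hx
    rw [show p1 x = p x from if_pos hx]
    exact hlow x hx
  have hmono1 : MonotoneOn p1 (Ioo a b) := by
    intro x hx y hy hxy
    rw [show p1 x = p x from if_pos hx, show p1 y = p y from if_pos hy]
    exact hmono hx hy hxy
  have := vdc_core a b hab f1 p1 hm1 hm2 hd1 t ht hlow1 hmono1 lam hlam
  rwa [setIntegral_congr_fun measurableSet_Ioo
    (fun x hx => by rw [show f1 x = f x from if_pos hx])] at this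

lemma vdc_pos (a b : ℝ) (hab : a < b) (f p : ℝ → ℝ)
    (hderiv : ∀ x ∈ Ioo a b, HasDerivAt f (p x) x)
    (hcont : ContinuousOn p (Ioo a b))
    (t : ℝ) (ht : 0 < t) (hlow : ∀ x ∈ Ioo a b, t ≤ p x)
    (hmono : MonotoneOn p (Ioo a b) ∨ AntitoneOn p (Ioo a b))
    (lam : ℝ) (hlam : 0 < lam) :
    ‖∫ x in Ioo a b, Complex.exp (Complex.I * (lam * f x))‖ ≤ 2 * (lam * t)⁻¹ := by
  rcases hmono with hm | hm
  · exact vdc_core' a b hab f p hderiv hcont t ht hlow hm lam hlam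
  · -- reflect and conjugate
    set g : ℝ → ℝ := fun x => -f (a + b - x) with hg
    set q : ℝ → ℝ := fun x => p (a + b - x) with hq
    have hrefl : ∀ x ∈ Ioo a b, a + b - x ∈ Ioo a b := by
      intro x hx; exact ⟨by linarith [hx.2], by linarith [hx.1]⟩
    have hd2 : ∀ x ∈ Ioo a b, HasDerivAt g (q x) x := by
      intro x hx
      have hinner : HasDerivAt (fun y : ℝ => a + b - y) (-1) x := by
        simpa using (hasDerivAt_id x).const_sub (a + b)
      have h1 := (hderiv _ (hrefl x hx)).comp x hinner
      have h2 := h1.neg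
      refine h2.congr_deriv ?_
      simp only [hq]; ring
    have hcont2 : ContinuousOn q (Ioo a b) := by
      apply hcont.comp ((continuous_const.sub continuous_id).continuousOn)
      intro x hx; exact hrefl x hx
    have hlow2 : ∀ x ∈ Ioo a b, t ≤ q x := fun x hx => hlow _ (hrefl x hx)
    have hmono2 : MonotoneOn q (Ioo a b) := by
      intro x hx y hy hxy
      exact hm (hrefl y hy) (hrefl x hx) (by linarith)
    have hbound := vdc_core' a b hab g q hd2 hcont2 t ht hlow2 hmono2 lam hlam
    have hkey : ∫ x in Ioo a b, Complex.exp (Complex.I * (lam * g x))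
        = (starRingEnd ℂ) (∫ x in Ioo a b, Complex.exp (Complex.I * (lam * f x))) := by
      have e1 : ∀ x : ℝ, Complex.exp (Complex.I * (lam * g x))
          = (starRingEnd ℂ) (Complex.exp (Complex.I * (lam * f (a + b - x)))) := by
        intro x
        rw [← Complex.exp_conj]
        congr 1
        simp [hg, map_mul, Complex.conj_I, Complex.conj_ofReal]
      calc ∫ x in Ioo a b, Complex.exp (Complex.I * (lam * g x))
          = ∫ x in Ioo a b, (starRingEnd ℂ) (Complex.exp (Complex.I * (lam * f (a + b - x)))) := by
            exact setIntegral_congr_fun measurableSet_Ioo (fun x _ => e1 x)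
      _ = ∫ x in a..b, (starRingEnd ℂ) (Complex.exp (Complex.I * (lam * f (a + b - x)))) := by
            rw [intervalIntegral.integral_of_le hab.le, integral_Ioc_eq_integral_Ioo]
      _ = ∫ x in a..b, (starRingEnd ℂ) (Complex.exp (Complex.I * (lam * f x))) := by
            have h5 := intervalIntegral.integral_comp_sub_left (a := a) (b := b)
              (fun u => (starRingEnd ℂ) (Complex.exp (Complex.I * (lam * f u)))) (a + b)
            simp only [add_sub_cancel_right, add_sub_cancel_left] at h5
            exact h5
      _ = ∫ x in Ioo a b, (starRingEnd ℂ) (Complex.exp (Complex.I * (lam * f x))) := by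
            rw [intervalIntegral.integral_of_le hab.le, integral_Ioc_eq_integral_Ioo]
      _ = (starRingEnd ℂ) (∫ x in Ioo a b, Complex.exp (Complex.I * (lam * f x))) :=
            integral_conj
    rw [hkey] at hbound
    rwa [RCLike.norm_conj] at hbound





/-- van der Corput: if `f` is `C¹` on `(a,b)` with `|f'| ≥ t` and `f'`
monotonic, then `|∫_a^b e^{iλ f(x)} dx| ≤ 3 (λ t)⁻¹` for all `λ > 0`. -/
theorem van_der_corput (a b : ℝ) (hab : a ≤ b) (f f' : ℝ → ℝ)
    (hderiv : ∀ x ∈ Set.Ioo a b, HasDerivAt f (f' x) x)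
    (hcont : ContinuousOn f' (Set.Ioo a b))
    (t : ℝ) (ht : 0 < t)
    (hlow : ∀ x ∈ Set.Ioo a b, t ≤ |f' x|)
    (hmono : MonotoneOn f' (Set.Ioo a b) ∨ AntitoneOn f' (Set.Ioo a b)) :
    ∀ lam : ℝ, 0 < lam →
      ‖∫ x in a..b, Complex.exp (Complex.I * (lam * f x))‖ ≤ 3 * (lam * t)⁻¹ := by
  intro lam hlam
  have hpos : (0:ℝ) ≤ (lam * t)⁻¹ := by positivity
  rcases eq_or_lt_of_le hab with rfl | hab'
  · simp only [intervalIntegral.integral_same, norm_zero]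
    positivity
  · rw [intervalIntegral.integral_of_le hab'.le, integral_Ioc_eq_integral_Ioo]
    by_cases hsign : ∀ x ∈ Set.Ioo a b, t ≤ f' x
    · have h := vdc_pos a b hab' f f' hderiv hcont t ht hsign hmono lam hlam
      linarith
    · push_neg at hsign
      obtain ⟨x₀, hx₀, hfx₀⟩ := hsign
      have hx₀neg : f' x₀ ≤ -t := by
        rcases abs_cases (f' x₀) with ⟨h1, _⟩ | ⟨h1, _⟩ <;>
          [linarith [hlow x₀ hx₀]; linarith [hlow x₀ hx₀]]
      have hneg : ∀ x ∈ Set.Ioo a b, f' x ≤ -t := by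
        intro x hx
        by_contra hcon
        push_neg at hcon
        have hxt : t ≤ f' x := by
          rcases abs_cases (f' x) with ⟨h1, _⟩ | ⟨h1, _⟩
          · linarith [hlow x hx]
          · linarith [hlow x hx]
        have hsub : Set.uIcc x₀ x ⊆ Set.Ioo a b :=
          (Set.ordConnected_Ioo).uIcc_subset hx₀ hx
        have hIVT := intermediate_value_uIcc (f := f') (hcont.mono hsub)
        have h0 : (0:ℝ) ∈ Set.uIcc (f' x₀) (f' x) :=
          Set.mem_uIcc.2 (Or.inl ⟨by linarith, by linarith⟩)
        obtain ⟨c, hc, hc0⟩ := hIVT h0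
        have hcl := hlow c (hsub hc)
        rw [hc0] at hcl
        simp only [abs_zero] at hcl
        linarith
      have hmono' : MonotoneOn (fun x => -f' x) (Set.Ioo a b)
          ∨ AntitoneOn (fun x => -f' x) (Set.Ioo a b) := by
        rcases hmono with h | h
        · exact Or.inr (fun x hx y hy hxy => neg_le_neg (h hx hy hxy))
        · exact Or.inl (fun x hx y hy hxy => neg_le_neg (h hx hy hxy))
      have h := vdc_pos a b hab' (fun x => -f x) (fun x => -f' x)
        (fun x hx => (hderiv x hx).neg) hcont.neg t ht
        (fun x hx => by have := hneg x hx; show t ≤ -f' x; linarith) hmono' lam hlam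
      have hkey : ∫ x in Set.Ioo a b, Complex.exp (Complex.I * (lam * (-f x)))
          = (starRingEnd ℂ) (∫ x in Set.Ioo a b, Complex.exp (Complex.I * (lam * f x))) := by
        rw [← integral_conj]
        apply setIntegral_congr_fun measurableSet_Ioo
        intro x _
        beta_reduce
        rw [← Complex.exp_conj]
        congr 1
        simp [map_mul, Complex.conj_I, Complex.conj_ofReal]
      beta_reduce at h
      push_cast at h
      rw [hkey, RCLike.norm_conj] at h
      linarith
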